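/- Let C be a closed model category. Every morphism f in Prod(C) may be factorized both as a cofibration followed by an acyclic fibration, and as an acyclic cofibration followed by a fibration. -/

import Mathlib

open CategoryTheory Limits

universe v u

/-- The category of formal products of objects of `C`. -/
structure FormalProd (C : Type u) [Category.{v} C] : Type (max u (v + 1)) where
  ι : Type v
  obj : ι → C

namespace FormalProd

variable {C : Type u} [Category.{v} C]

instance : Category.{v} (FormalProd C) where
  Hom A B := Σ r : B.ι → A.ι, ∀ j : B.ι, A.obj (r j) ⟶ B.obj j
  id A := ⟨fun i => i, fun i => 𝟙 (A.obj i)⟩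
  comp {A B D} f g := ⟨fun k => f.1 (g.1 k), fun k => f.2 (g.1 k) ≫ g.2 k⟩
  id_comp f := by obtain ⟨r, φ⟩ := f; simp
  comp_id f := by obtain ⟨r, φ⟩ := f; simp
  assoc f g h := by simp

/-- The index map of a morphism of formal products. -/
def Hom.index {A B : FormalProd C} (f : A ⟶ B) : B.ι → A.ι := f.1

/-- The components of a morphism of formal products. -/
def Hom.component {A B : FormalProd C} (f : A ⟶ B) (j : B.ι) :
    A.obj (Hom.index f j) ⟶ B.obj j := f.2 j

end FormalProd

/-- A closed model category structure on `C` (Quillen): three classes of morphisms—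
cofibrations, fibrations and weak equivalences—each containing the identities and
closed under composition and retracts; weak equivalences satisfy two-out-of-three;
(acyclic) cofibrations have the left lifting property with respect to (acyclic)
fibrations; and every morphism factors as a cofibration followed by an acyclic
fibration and as an acyclic cofibration followed by a fibration.  (The requirement
that `C` have all small limits and colimits is imposed separately via
`HasLimits C` and `HasColimits C`.) -/
structure ClosedModelStructure (C : Type u) [Category.{v} C] where
  cof : MorphismProperty C
  fib : MorphismProperty C
  weq : MorphismProperty C
  cof_id : ∀ X : C, cof (𝟙 X)
  fib_id : ∀ X : C, fib (𝟙 X)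
  weq_id : ∀ X : C, weq (𝟙 X)
  cof_comp : ∀ {X Y Z : C} (f : X ⟶ Y) (g : Y ⟶ Z), cof f → cof g → cof (f ≫ g)
  fib_comp : ∀ {X Y Z : C} (f : X ⟶ Y) (g : Y ⟶ Z), fib f → fib g → fib (f ≫ g)
  weq_comp : ∀ {X Y Z : C} (f : X ⟶ Y) (g : Y ⟶ Z), weq f → weq g → weq (f ≫ g)
  weq_of_comp_right : ∀ {X Y Z : C} (f : X ⟶ Y) (g : Y ⟶ Z),
    weq f → weq (f ≫ g) → weq g
  weq_of_comp_left : ∀ {X Y Z : C} (f : X ⟶ Y) (g : Y ⟶ Z),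
    weq g → weq (f ≫ g) → weq f
  cof_retract : ∀ {A A' B B' : C} (f : A ⟶ A') (g : B ⟶ B')
    (i : A ⟶ B) (r : B ⟶ A) (i' : A' ⟶ B') (r' : B' ⟶ A'),
    i ≫ r = 𝟙 A → i' ≫ r' = 𝟙 A' → i ≫ g = f ≫ i' → r ≫ f = g ≫ r' →
    cof g → cof f
  fib_retract : ∀ {A A' B B' : C} (f : A ⟶ A') (g : B ⟶ B')
    (i : A ⟶ B) (r : B ⟶ A) (i' : A' ⟶ B') (r' : B' ⟶ A'),
    i ≫ r = 𝟙 A → i' ≫ r' = 𝟙 A' → i ≫ g = f ≫ i' → r ≫ f = g ≫ r' →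
    fib g → fib f
  weq_retract : ∀ {A A' B B' : C} (f : A ⟶ A') (g : B ⟶ B')
    (i : A ⟶ B) (r : B ⟶ A) (i' : A' ⟶ B') (r' : B' ⟶ A'),
    i ≫ r = 𝟙 A → i' ≫ r' = 𝟙 A' → i ≫ g = f ≫ i' → r ≫ f = g ≫ r' →
    weq g → weq f
  lift_cof_acyclicFib : ∀ {A B X Y : C} (f : A ⟶ B) (g : X ⟶ Y) (u : A ⟶ X)
    (v : B ⟶ Y), cof f → fib g → weq g → u ≫ g = f ≫ v →
    ∃ h : B ⟶ X, f ≫ h = u ∧ h ≫ g = v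
  lift_acyclicCof_fib : ∀ {A B X Y : C} (f : A ⟶ B) (g : X ⟶ Y) (u : A ⟶ X)
    (v : B ⟶ Y), cof f → weq f → fib g → u ≫ g = f ≫ v →
    ∃ h : B ⟶ X, f ≫ h = u ∧ h ≫ g = v
  fact_cof_acyclicFib : ∀ {X Y : C} (f : X ⟶ Y),
    ∃ (Z : C) (i : X ⟶ Z) (p : Z ⟶ Y), cof i ∧ fib p ∧ weq p ∧ i ≫ p = f
  fact_acyclicCof_fib : ∀ {X Y : C} (f : X ⟶ Y),
    ∃ (Z : C) (i : X ⟶ Z) (p : Z ⟶ Y), cof i ∧ weq i ∧ fib p ∧ i ≫ p = f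

namespace FormalProd

variable {C : Type u} [Category.{v} C]

/-- A morphism of `Prod(C)` is a *cofibration* if all of its components are
cofibrations in `C`. -/
def prodCof (M : ClosedModelStructure C) : MorphismProperty (FormalProd C) :=
  fun _ B f => ∀ j : B.ι, M.cof (f.2 j)

/-- A morphism of `Prod(C)` is a *weak equivalence* if its index map is a bijection
and all of its components are weak equivalences in `C`. -/
def prodWeq (M : ClosedModelStructure C) : MorphismProperty (FormalProd C) :=
  fun _ B f => Function.Bijective f.1 ∧ ∀ j : B.ι, M.weq (f.2 j)

/-- For a morphism `f : ∏_{i∈I} A_i ⟶ ∏_{j∈J} B_j` of `Prod(C)` and `i ∈ I`, the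
induced morphism `f^i : A_i ⟶ ∏ { B_j | i_j = i }` into the product in `C` of the
`B_j` over those `j` with `i_j = i`, whose components are the `f_j` with `i_j = i`. -/
noncomputable def fiberMap [HasLimits C] {A B : FormalProd C} (f : A ⟶ B) (i : A.ι) :
    A.obj i ⟶ ∏ᶜ (fun j : {j : B.ι // f.1 j = i} => B.obj j.1) :=
  Pi.lift fun j => eqToHom (congrArg A.obj j.2.symm) ≫ f.2 j.1

/-- A morphism `f` of `Prod(C)` is a *fibration* if for every index `i` of the source
the induced morphism `f^i` is a fibration in `C`. -/
def prodFib [HasLimits C] (M : ClosedModelStructure C) :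
    MorphismProperty (FormalProd C) :=
  fun A _ f => ∀ i : A.ι, M.fib (fiberMap f i)

end FormalProd


/-- Isomorphisms are fibrations (being retracts of identities). -/
theorem ClosedModelStructure.fib_of_isIso {C : Type u} [Category.{v} C]
    (M : ClosedModelStructure C) {X Y : C} (e : X ⟶ Y) [IsIso e] : M.fib e := by
  refine M.fib_retract e (𝟙 X) (𝟙 X) (𝟙 X) (inv e) e ?_ ?_ ?_ ?_ (M.fib_id X) <;> simp

open FormalProd in
/-- Every morphism of `Prod(C)` factors both as a cofibration followed by an acyclic
fibration and as an acyclic cofibration followed by a fibration. -/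
theorem formalProd_factorizations (C : Type u) [Category.{v} C]
    [HasLimits C] [HasColimits C] (M : ClosedModelStructure C)
    {A B : FormalProd C} (f : A ⟶ B) :
    (∃ (Z : FormalProd C) (i : A ⟶ Z) (p : Z ⟶ B),
      prodCof M i ∧ prodFib M p ∧ prodWeq M p ∧ i ≫ p = f) ∧
    (∃ (Z : FormalProd C) (i : A ⟶ Z) (p : Z ⟶ B),
      prodCof M i ∧ prodWeq M i ∧ prodFib M p ∧ i ≫ p = f) := by
  constructor
  · -- cofibration followed by acyclic fibration
    choose Z c w hc hw1 hw2 hcw using fun j : B.ι => M.fact_cof_acyclicFib (f.2 j)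
    refine ⟨⟨B.ι, Z⟩, ⟨f.1, c⟩, ⟨id, w⟩, hc, ?_, ⟨Function.bijective_id, hw2⟩, ?_⟩
    · intro j
      set p : (⟨B.ι, Z⟩ : FormalProd C) ⟶ B := ⟨id, w⟩ with hp
      let e : B.obj j ⟶ ∏ᶜ (fun j' : {j' : B.ι // p.1 j' = j} => B.obj j'.1) :=
        Pi.lift (fun j' => eqToHom (congrArg B.obj j'.2.symm))
      have he : e ≫ Pi.π _ (⟨j, rfl⟩ : {j' : B.ι // p.1 j' = j}) = 𝟙 _ := by
        simp [e]
      have he' : Pi.π (fun j' : {j' : B.ι // p.1 j' = j} => B.obj j'.1) (⟨j, rfl⟩ : {j' : B.ι // p.1 j' = j}) ≫ e = 𝟙 _ := by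
        apply Pi.hom_ext
        rintro ⟨j', hj'⟩
        have hj'' : j' = j := hj'
        subst hj''
        simp [e]
      have : IsIso e := ⟨Pi.π _ (⟨j, rfl⟩ : {j' : B.ι // p.1 j' = j}), he, he'⟩
      have heq : fiberMap p j = w j ≫ e := by
        apply Pi.hom_ext
        rintro ⟨j', hj'⟩
        have hj'' : j' = j := hj'
        subst hj''
        simp [fiberMap, e, p]
      rw [heq]
      exact M.fib_comp _ _ (hw1 j) (M.fib_of_isIso e)
    · have : (fun j => c j ≫ w j) = f.2 := funext fun j => hcw j
      show (⟨fun j => f.1 (id j), fun j => c j ≫ w j⟩ : A ⟶ B) = ⟨f.1, f.2⟩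
      exact congrArg _ this
  · -- acyclic cofibration followed by fibration
    choose Z q s hq hqw hs hqs using fun i : A.ι => M.fact_acyclicCof_fib (fiberMap f i)
    refine ⟨⟨A.ι, Z⟩, ⟨id, q⟩,
      ⟨f.1, fun j => s (f.1 j) ≫ Pi.π _ (⟨j, rfl⟩ : {j' : B.ι // f.1 j' = f.1 j})⟩, hq, ⟨Function.bijective_id, hqw⟩,
      ?_, ?_⟩
    · intro i
      set p : (⟨A.ι, Z⟩ : FormalProd C) ⟶ B := ⟨f.1, fun j => s (f.1 j) ≫ Pi.π _ (⟨j, rfl⟩ : {j' : B.ι // f.1 j' = f.1 j})⟩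
        with hp
      have heq : fiberMap p i = s i := by
        apply Pi.hom_ext
        rintro ⟨j, hj⟩
        have hj' : f.1 j = i := hj
        subst hj'
        simp [fiberMap, p]
      rw [heq]
      exact hs i
    · have : (fun j => q (f.1 j) ≫ (s (f.1 j) ≫ Pi.π _ (⟨j, rfl⟩ : {j' : B.ι // f.1 j' = f.1 j}))) = f.2 := by
        funext j
        rw [← Category.assoc, hqs (f.1 j)]
        simp [fiberMap]
      show (⟨fun j => id (f.1 j), fun j => q (f.1 j) ≫ (s (f.1 j) ≫ Pi.π _ (⟨j, rfl⟩ : {j' : B.ι // f.1 j' = f.1 j}))⟩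
        : A ⟶ B) = ⟨f.1, f.2⟩
      exact congrArg _ this
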